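/- For all k, r ∈ ℕ, the Saras triangle entry admits the explicit alternating-sum formula μ(k, r) = Σ_{i=0}^{r} (−1)^i · C(r, i) · (r + 1 − i)^k, where the right-hand side is interpreted as an integer (and is in fact a nonnegative integer equal to μ(k, r)). -/

import Mathlib

open Finset Nat

def saras : ℕ → ℕ → ℕ
  | _, 0 => 1
  | 0, _ + 1 => 0
  | k + 1, r + 1 =>
      if r + 1 ≤ k + 1 then (r + 1) * saras k r + (r + 2) * saras k (r + 1) else 0

lemma saras_eq_zero : ∀ k r : ℕ, k < r → saras k r = 0
  | _, 0, h => absurd h (by omega)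
  | 0, _ + 1, _ => rfl
  | k + 1, r + 1, h => by
      simp only [saras]
      rw [if_neg (by omega)]

lemma saras_rec (k r : ℕ) :
    saras (k+1) (r+1) = (r+1) * saras k r + (r+2) * saras k (r+1) := by
  by_cases h : r + 1 ≤ k + 1
  · simp [saras, h]
  · rw [saras_eq_zero (k+1) (r+1) (by omega), saras_eq_zero k r (by omega),
      saras_eq_zero k (r+1) (by omega)]
    ring

lemma key (k r : ℕ) :
    ∑ i ∈ Finset.range (r+2), (-1:ℤ)^i * (Nat.choose (r+1) i : ℤ) * ((r+2-i:ℕ):ℤ)^(k+1)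
    = ((r:ℤ)+1) * ∑ i ∈ Finset.range (r+1), (-1)^i * (Nat.choose r i:ℤ) * ((r+1-i:ℕ):ℤ)^k
      + ((r:ℤ)+2) * ∑ i ∈ Finset.range (r+2), (-1)^i * (Nat.choose (r+1) i:ℤ) * ((r+2-i:ℕ):ℤ)^k := by
  have step1 :
      ∑ i ∈ Finset.range (r+2), (-1:ℤ)^i * (Nat.choose (r+1) i : ℤ) * ((r+2-i:ℕ):ℤ)^(k+1)
      = ∑ i ∈ Finset.range (r+2),
          (((r:ℤ)+2) * ((-1)^i * (Nat.choose (r+1) i : ℤ) * ((r+2-i:ℕ):ℤ)^k)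
            - (i:ℤ) * ((-1)^i * (Nat.choose (r+1) i : ℤ) * ((r+2-i:ℕ):ℤ)^k)) := by
    refine Finset.sum_congr rfl fun i hi => ?_
    have hi' : i ≤ r + 1 := by simpa [Nat.lt_succ_iff] using hi
    have hc : ((r+2-i:ℕ):ℤ) = (r:ℤ)+2-i := by
      rw [Nat.cast_sub (by omega)]; push_cast; ring
    rw [pow_succ, hc]; ring
  have step2 :
      ∑ i ∈ Finset.range (r+2), (i:ℤ) * ((-1)^i * (Nat.choose (r+1) i : ℤ) * ((r+2-i:ℕ):ℤ)^k)
      = -(((r:ℤ)+1) * ∑ i ∈ Finset.range (r+1), (-1)^i * (Nat.choose r i:ℤ) * ((r+1-i:ℕ):ℤ)^k) := by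
    rw [Finset.sum_range_succ']
    simp only [Nat.cast_zero, zero_mul, add_zero]
    have : ∀ i ∈ Finset.range (r+1),
        (((i+1:ℕ)):ℤ) * ((-1)^(i+1) * (Nat.choose (r+1) (i+1) : ℤ) * ((r+2-(i+1):ℕ):ℤ)^k)
        = -(((r:ℤ)+1) * ((-1)^i * (Nat.choose r i:ℤ) * ((r+1-i:ℕ):ℤ)^k)) := by
      intro i hi
      have hch : ((r:ℤ)+1) * (Nat.choose r i : ℤ) = (Nat.choose (r+1) (i+1) : ℤ) * ((i:ℤ)+1) := by
        exact_mod_cast congrArg (Nat.cast (R := ℤ)) (Nat.add_one_mul_choose_eq r i)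
      have hsub : (r+2-(i+1):ℕ) = (r+1-i:ℕ) := by omega
      rw [hsub]
      push_cast
      calc ((i:ℤ)+1) * ((-1)^(i+1) * (Nat.choose (r+1) (i+1) : ℤ) * ((r+1-i:ℕ):ℤ)^k)
          = -((-1)^i * ((Nat.choose (r+1) (i+1) : ℤ) * ((i:ℤ)+1)) * ((r+1-i:ℕ):ℤ)^k) := by
            rw [pow_succ]; ring
        _ = -((-1)^i * (((r:ℤ)+1) * (Nat.choose r i:ℤ)) * ((r+1-i:ℕ):ℤ)^k) := by rw [← hch]
        _ = -(((r:ℤ)+1) * ((-1)^i * (Nat.choose r i:ℤ) * ((r+1-i:ℕ):ℤ)^k)) := by ring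
    rw [Finset.sum_congr rfl this, Finset.sum_neg_distrib, ← Finset.mul_sum]
  rw [step1, Finset.sum_sub_distrib, ← Finset.mul_sum, step2]
  ring

theorem stmt7 (k r : ℕ) :
    (saras k r : ℤ) =
      ∑ i ∈ Finset.range (r + 1), (-1) ^ i * (Nat.choose r i : ℤ) * ((r + 1 - i : ℕ) : ℤ) ^ k := by
  induction k generalizing r with
  | zero =>
    simp only [pow_zero, mul_one]
    rw [Int.alternating_sum_range_choose]
    cases r with
    | zero => simp [saras]
    | succ n => simp [saras_eq_zero 0 (n+1) (by omega)]
  | succ k ih =>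
    cases r with
    | zero => simp [saras]
    | succ r =>
      rw [saras_rec]
      push_cast
      rw [ih r, ih (r+1)]
      have := key k r
      push_cast at this ⊢
      linarith [this]
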